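/- arXiv:1609.00715 — 2 statements merged into one kernel-verified Lean document; each statement's English description precedes it below -/
import Mathlib

section
/- Let r ≥ 1 be an integer, p, q nonzero complex numbers with |p| < 1, |q| < 1, and m ∈ ℤ. For every nonzero z ∈ ℂ not a pole of the functions involved, γ^{(r)}(qz, m+1; p,q) = θ(z p^m; p^r) · γ^{(r)}(z, m; p,q) and γ^{(r)}(pz, m−1; p,q) = θ(z q^{r−m}; q^r) · γ^{(r)}(z, m; p,q). -/
open Complex Finset

noncomputable section

/-- The infinite q-Pochhammer symbol `(z;p)_∞ = ∏_{j≥0} (1 - z p^j)`. -/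
def qPochInf (z p : ℂ) : ℂ := ∏' j : ℕ, (1 - z * p ^ j)

/-- The theta function `θ(z;p) = (z;p)_∞ (p z⁻¹; p)_∞`. -/
def theta0 (z p : ℂ) : ℂ := qPochInf z p * qPochInf (p * z⁻¹) p

/-- The elliptic gamma function `Γ(z;p,q)`. -/
def ellGamma (z p q : ℂ) : ℂ :=
  ∏' jk : ℕ × ℕ,
    (1 - z⁻¹ * p ^ (jk.1 + 1) * q ^ (jk.2 + 1)) / (1 - z * p ^ jk.1 * q ^ jk.2)

/-- The second order elliptic gamma function `Γ(z;p,q,t)`. -/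
def ellGamma3 (z p q t : ℂ) : ℂ :=
  ∏' x : ℕ × ℕ × ℕ,
    (1 - z * p ^ x.1 * q ^ x.2.1 * t ^ x.2.2) *
      (1 - z⁻¹ * p ^ (x.1 + 1) * q ^ (x.2.1 + 1) * t ^ (x.2.2 + 1))

/-- The lens space elliptic gamma function `γ^{(r)}(z,m;p,q)`. -/
def lensGamma (r : ℕ) (z : ℂ) (m : ℤ) (p q : ℂ) : ℂ :=
  ellGamma (z * p ^ m) (p ^ r) (p * q) * ellGamma (z * q ^ ((r : ℤ) - m)) (q ^ r) (p * q)

/-- The rarefied elliptic gamma function `Γ^{(r)}(z,m;p,q)`, built with fixed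
square roots σ, τ satisfying `σ² = pq`, `τ² = p/q`, `στ = p`. -/
def rarGamma (r : ℕ) (z : ℂ) (m : ℤ) (p q σ τ : ℂ) : ℂ :=
  (-z / σ) ^ (m * (m - 1) / 2) * τ ^ (m * (m - 1) * (2 * m - 1) / 6) * lensGamma r z m p q

/-- `w` avoids the pole set `{P^{-j} Q^{-k} : j,k ≥ 0}` of `ellGamma w P Q`. -/
def notPole (w P Q : ℂ) : Prop := ∀ j k : ℕ, w ≠ P ^ (-(j : ℤ)) * Q ^ (-(k : ℤ))

/-- `z` is not a pole of either elliptic gamma factor of `lensGamma r z m p q`. -/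
def lensReg (r : ℕ) (z : ℂ) (m : ℤ) (p q : ℂ) : Prop :=
  notPole (z * p ^ m) (p ^ r) (p * q) ∧ notPole (z * q ^ ((r : ℤ) - m)) (q ^ r) (p * q)


/-- A product with a zero factor has product zero. -/
lemma hasProd_zero_of_eq_zero {ι : Type*} {f : ι → ℂ} (i0 : ι) (h : f i0 = 0) :
    HasProd f 0 := by
  have hev : (fun s : Finset ι => ∏ i ∈ s, f i) =ᶠ[Filter.atTop] fun _ => (0 : ℂ) := by
    refine Filter.eventually_atTop.2 ⟨{i0}, fun s hs => ?_⟩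
    exact Finset.prod_eq_zero (hs (Finset.mem_singleton_self i0)) h
  exact Filter.Tendsto.congr' hev.symm tendsto_const_nhds

lemma tprod_eq_zero_of {ι : Type*} {f : ι → ℂ} (i0 : ι) (h : f i0 = 0) :
    ∏' i, f i = 0 := (hasProd_zero_of_eq_zero i0 h).tprod_eq

lemma summable_log_one_sub {ι : Type*} {u : ι → ℂ} (hu : Summable fun i => ‖u i‖)
    (h : ∀ i, 1 - u i ≠ 0) : Summable fun i => Complex.log (1 - u i) := by
  refine Summable.of_norm_bounded_eventually (g := fun i => (3/2) * ‖u i‖) (hu.mul_left _) ?_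
  have hten : Filter.Tendsto (fun i => ‖u i‖) Filter.cofinite (nhds 0) :=
    hu.tendsto_cofinite_zero
  filter_upwards [(hten.eventually_lt_const (by norm_num : (0:ℝ) < 1/2))] with i hi
  have hb := Complex.norm_log_one_add_half_le_self (z := -u i) (by simpa using hi.le)
  simpa [sub_eq_add_neg] using hb

lemma multipliable_one_sub {ι : Type*} {u : ι → ℂ} (hu : Summable fun i => ‖u i‖) :
    Multipliable fun i => 1 - u i := by
  by_cases h : ∀ i, 1 - u i ≠ 0
  · exact Complex.multipliable_of_summable_log (summable_log_one_sub hu h)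
  · push_neg at h
    obtain ⟨i0, h0⟩ := h
    exact ⟨0, hasProd_zero_of_eq_zero i0 h0⟩

lemma tprod_one_sub_ne_zero {ι : Type*} {u : ι → ℂ} (hu : Summable fun i => ‖u i‖)
    (h : ∀ i, 1 - u i ≠ 0) : (∏' i, (1 - u i)) ≠ 0 := by
  have := Complex.cexp_tsum_eq_tprod (f := fun i => 1 - u i)
    (fun i => h i) (summable_log_one_sub hu h)
  beta_reduce at this
  rw [← this]
  exact Complex.exp_ne_zero _

lemma summable_norm_geom1 {P : ℂ} (hP : ‖P‖ < 1) (c : ℂ) :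
    Summable fun j : ℕ => ‖c * P ^ j‖ := by
  have h : Summable fun j : ℕ => ‖c‖ * ‖P‖ ^ j :=
    (summable_geometric_of_lt_one (norm_nonneg P) hP).mul_left _
  exact h.congr fun j => by simp [norm_mul, norm_pow]

lemma summable_norm_geom2 {P Q : ℂ} (hP : ‖P‖ < 1) (hQ : ‖Q‖ < 1) (c : ℂ) :
    Summable fun jk : ℕ × ℕ => ‖c * P ^ jk.1 * Q ^ jk.2‖ := by
  have h1 : Summable fun j : ℕ => ‖c‖ * ‖P‖ ^ j :=
    (summable_geometric_of_lt_one (norm_nonneg P) hP).mul_left _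
  have h2 : Summable fun k : ℕ => ‖Q‖ ^ k :=
    summable_geometric_of_lt_one (norm_nonneg Q) hQ
  have h := h1.mul_of_nonneg h2
    (fun j => by positivity) (fun k => by positivity)
  exact h.congr fun jk => by simp [norm_mul, norm_pow]

lemma summable_norm_quot {P Q : ℂ} (hP : ‖P‖ < 1) (hQ : ‖Q‖ < 1) (c d : ℂ) :
    Summable fun jk : ℕ × ℕ =>
      ‖c * P ^ jk.1 * Q ^ jk.2 / (1 - d * P ^ jk.1 * Q ^ jk.2)‖ := by
  refine Summable.of_norm_bounded_eventually (g := fun jk : ℕ × ℕ => 2 * ‖c * P ^ jk.1 * Q ^ jk.2‖)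
    ((summable_norm_geom2 hP hQ c).mul_left 2) ?_
  have hten : Filter.Tendsto (fun jk : ℕ × ℕ => ‖d * P ^ jk.1 * Q ^ jk.2‖)
      Filter.cofinite (nhds 0) := (summable_norm_geom2 hP hQ d).tendsto_cofinite_zero
  filter_upwards [hten.eventually_lt_const (by norm_num : (0:ℝ) < 1/2)] with jk hjk
  rw [norm_norm, norm_div]
  have hden : (1:ℝ)/2 ≤ ‖1 - d * P ^ jk.1 * Q ^ jk.2‖ := by
    have h1 : ‖(1:ℂ)‖ - ‖d * P ^ jk.1 * Q ^ jk.2‖ ≤ ‖1 - d * P ^ jk.1 * Q ^ jk.2‖ :=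
      norm_sub_norm_le _ _
    rw [norm_one] at h1
    linarith
  rw [div_le_iff₀ (by linarith)]
  calc ‖c * P ^ jk.1 * Q ^ jk.2‖
      = 2 * ‖c * P ^ jk.1 * Q ^ jk.2‖ * (1/2) := by ring
    _ ≤ 2 * ‖c * P ^ jk.1 * Q ^ jk.2‖ * ‖1 - d * P ^ jk.1 * Q ^ jk.2‖ := by
        have : (0:ℝ) ≤ 2 * ‖c * P ^ jk.1 * Q ^ jk.2‖ := by positivity
        exact mul_le_mul_of_nonneg_left hden this

set_option maxHeartbeats 1000000 in
lemma tprod_split_nat2 {f : ℕ × ℕ → ℂ} (hf : Multipliable f)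
    (h0 : Multipliable fun j : ℕ => f (j, 0))
    (h1 : Multipliable fun jk : ℕ × ℕ => f (jk.1, jk.2 + 1))
    (hrow0 : ∀ j, Multipliable fun k => f (j, k))
    (hrow : ∀ j, Multipliable fun k => f (j, k + 1)) :
    ∏' jk, f jk = (∏' j, f (j, 0)) * ∏' jk : ℕ × ℕ, f (jk.1, jk.2 + 1) := by
  have e1 : (∏' jk : ℕ × ℕ, f jk) = ∏' (j : ℕ) (k : ℕ), f (j, k) := hf.tprod_prod' hrow0
  have e2 : (∏' jk : ℕ × ℕ, f (jk.1, jk.2 + 1)) = ∏' (j : ℕ) (k : ℕ), f (j, k + 1) :=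
    h1.tprod_prod' fun j => hrow j
  rw [e1, e2]
  have houter : Multipliable fun j => ∏' k, f (j, k + 1) :=
    ⟨_, h1.hasProd.prod_fiberwise fun j => (hrow j).hasProd⟩
  calc (∏' j, ∏' k, f (j, k))
      = ∏' j, (f (j, 0) * ∏' k, f (j, k + 1)) :=
        tprod_congr fun j => tprod_eq_zero_mul' (hrow j)
    _ = (∏' j, f (j, 0)) * ∏' j, ∏' k, f (j, k + 1) := h0.tprod_mul houter

set_option maxHeartbeats 2000000 in
lemma ellGamma_shift {P Q w : ℂ} (hP0 : P ≠ 0) (hQ0 : Q ≠ 0)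
    (hP : ‖P‖ < 1) (hQ : ‖Q‖ < 1) (hw : w ≠ 0)
    (h1 : notPole w P Q) (h2 : notPole (w * Q) P Q) :
    ellGamma (w * Q) P Q = theta0 w P * ellGamma w P Q := by
  set a : ℕ × ℕ → ℂ := fun jk => 1 - w⁻¹ * P ^ (jk.1 + 1) * Q ^ jk.2 with ha
  set b : ℕ × ℕ → ℂ := fun jk => 1 - w * P ^ jk.1 * Q ^ jk.2 with hb
  have hEw : ellGamma w P Q = ∏' jk : ℕ × ℕ, a (jk.1, jk.2 + 1) / b jk := rfl
  have hEwQ : ellGamma (w * Q) P Q = ∏' jk : ℕ × ℕ, a jk / b (jk.1, jk.2 + 1) := by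
    unfold ellGamma
    refine tprod_congr fun jk => ?_
    have hnum : (w * Q)⁻¹ * P ^ (jk.1 + 1) * Q ^ (jk.2 + 1)
        = w⁻¹ * P ^ (jk.1 + 1) * Q ^ jk.2 := by
      field_simp
      ring
    have hden : w * Q * P ^ jk.1 * Q ^ jk.2 = w * P ^ jk.1 * Q ^ (jk.2 + 1) := by
      rw [pow_succ]; ring
    rw [hnum, hden]
  have hTh : theta0 w P = (∏' j : ℕ, b (j, 0)) * ∏' j : ℕ, a (j, 0) := by
    unfold theta0 qPochInf
    congr 1
    · exact tprod_congr fun j => by simp [hb]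
    · refine tprod_congr fun j => ?_
      simp only [ha, pow_zero, mul_one, pow_succ]
      ring_nf

  by_cases hA : ∀ jk : ℕ × ℕ, a jk ≠ 0
  · -- main case: no zero factors in the numerators
    have hB : ∀ jk : ℕ × ℕ, b jk ≠ 0 := by
      rintro ⟨j, k⟩ hzero
      apply h1 j k
      have hone : w * P ^ j * Q ^ k = 1 := by
        have h' := sub_eq_zero.mp hzero
        simpa using h'.symm
      have hPj : P ^ j ≠ 0 := pow_ne_zero _ hP0
      have hQk : Q ^ k ≠ 0 := pow_ne_zero _ hQ0
      rw [zpow_neg, zpow_neg, zpow_natCast, zpow_natCast]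
      field_simp
      linear_combination hone
    have hB1 : ∀ jk : ℕ × ℕ, b (jk.1, jk.2 + 1) ≠ 0 := fun jk => hB (jk.1, jk.2 + 1)
    -- multipliability of all families involved
    have Ma : Multipliable a :=
      (multipliable_one_sub (summable_norm_geom2 hP hQ (w⁻¹ * P))).congr
        (fun jk => by simp only [ha]; rw [pow_succ]; ring)
    have Mb : Multipliable b :=
      (multipliable_one_sub (summable_norm_geom2 hP hQ w)).congr (fun jk => by simp only [hb])
    have Ma1 : Multipliable (fun jk : ℕ × ℕ => a (jk.1, jk.2 + 1)) :=
      (multipliable_one_sub (summable_norm_geom2 hP hQ (w⁻¹ * P * Q))).congr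
        (fun jk => by simp only [ha]; rw [pow_succ, pow_succ]; ring)
    have Mb1 : Multipliable (fun jk : ℕ × ℕ => b (jk.1, jk.2 + 1)) :=
      (multipliable_one_sub (summable_norm_geom2 hP hQ (w * Q))).congr
        (fun jk => by simp only [hb]; rw [pow_succ]; ring)
    have Ma0 : Multipliable (fun j : ℕ => a (j, 0)) :=
      (multipliable_one_sub (summable_norm_geom1 hP (w⁻¹ * P))).congr
        (fun j => by simp only [ha, pow_zero, mul_one]; rw [pow_succ]; ring)
    have Mb0 : Multipliable (fun j : ℕ => b (j, 0)) :=
      (multipliable_one_sub (summable_norm_geom1 hP w)).congr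
        (fun j => by simp only [hb, pow_zero, mul_one])
    have Marow : ∀ j, Multipliable fun k => a (j, k) := fun j =>
      (multipliable_one_sub (summable_norm_geom1 hQ (w⁻¹ * P ^ (j + 1)))).congr
        (fun k => by simp only [ha])
    have MarowS : ∀ j, Multipliable fun k => a (j, k + 1) := fun j =>
      (multipliable_one_sub (summable_norm_geom1 hQ (w⁻¹ * P ^ (j + 1) * Q))).congr
        (fun k => by simp only [ha]; rw [pow_succ]; ring)
    have Mbrow : ∀ j, Multipliable fun k => b (j, k) := fun j =>
      (multipliable_one_sub (summable_norm_geom1 hQ (w * P ^ j))).congr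
        (fun k => by simp only [hb])
    have MbrowS : ∀ j, Multipliable fun k => b (j, k + 1) := fun j =>
      (multipliable_one_sub (summable_norm_geom1 hQ (w * P ^ j * Q))).congr
        (fun k => by simp only [hb]; rw [pow_succ]; ring)
    have Mf1 : Multipliable (fun jk : ℕ × ℕ => a (jk.1, jk.2 + 1) / b jk) :=
      (multipliable_one_sub (summable_norm_quot hP hQ (w⁻¹ * P * Q - w) w)).congr
        (fun jk => by
          have hbne := hB jk
          simp only [hb] at hbne
          simp only [ha, hb]
          field_simp
          ring)
    have Mf2 : Multipliable (fun jk : ℕ × ℕ => a jk / b (jk.1, jk.2 + 1)) :=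
      (multipliable_one_sub (summable_norm_quot hP hQ (w⁻¹ * P - w * Q) (w * Q))).congr
        (fun jk => by
          have hbne := hB1 jk
          simp only [hb] at hbne
          have hbne' : 1 - w * Q * P ^ jk.1 * Q ^ jk.2 ≠ 0 := by
            intro hzz
            apply hbne
            rw [← hzz, pow_succ]
            ring
          simp only [ha, hb]
          rw [pow_succ]
          field_simp
          ring)
    -- nonvanishing of the denominator products
    have hNB : (∏' jk : ℕ × ℕ, b jk) ≠ 0 :=
      tprod_one_sub_ne_zero (summable_norm_geom2 hP hQ w) (fun jk => hB jk)
    have eB1 : ∀ jk : ℕ × ℕ, (1 - (w * Q) * P ^ jk.1 * Q ^ jk.2) = b (jk.1, jk.2 + 1) :=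
      fun jk => by simp only [hb]; rw [pow_succ]; ring
    have hB1ne : (∏' jk : ℕ × ℕ, b (jk.1, jk.2 + 1)) ≠ 0 := by
      have h' := tprod_one_sub_ne_zero (summable_norm_geom2 hP hQ (w * Q))
        (fun jk => by rw [eB1 jk]; exact hB1 jk)
      rwa [tprod_congr eB1] at h'
    have eB0 : ∀ j : ℕ, (1 - w * P ^ j) = b (j, 0) := fun j => by simp [hb]
    have hB0ne : (∏' j : ℕ, b (j, 0)) ≠ 0 := by
      have h' := tprod_one_sub_ne_zero (summable_norm_geom1 hP w)
        (fun j => by rw [eB0 j]; exact hB (j, 0))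
      rwa [tprod_congr eB0] at h'
    -- key product identities
    have key1 : ellGamma w P Q * (∏' jk : ℕ × ℕ, b jk)
        = ∏' jk : ℕ × ℕ, a (jk.1, jk.2 + 1) := by
      rw [hEw, ← Mf1.tprod_mul Mb]
      exact tprod_congr fun jk => div_mul_cancel₀ _ (hB jk)
    have key2 : ellGamma (w * Q) P Q * (∏' jk : ℕ × ℕ, b (jk.1, jk.2 + 1))
        = ∏' jk : ℕ × ℕ, a jk := by
      rw [hEwQ, ← Mf2.tprod_mul Mb1]
      exact tprod_congr fun jk => div_mul_cancel₀ _ (hB1 jk)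
    have splitA : (∏' jk : ℕ × ℕ, a jk)
        = (∏' j : ℕ, a (j, 0)) * ∏' jk : ℕ × ℕ, a (jk.1, jk.2 + 1) :=
      tprod_split_nat2 Ma Ma0 Ma1 Marow MarowS
    have splitB : (∏' jk : ℕ × ℕ, b jk)
        = (∏' j : ℕ, b (j, 0)) * ∏' jk : ℕ × ℕ, b (jk.1, jk.2 + 1) :=
      tprod_split_nat2 Mb Mb0 Mb1 Mbrow MbrowS
    have hEwQ' : ellGamma (w * Q) P Q
        = (∏' jk : ℕ × ℕ, a jk) / (∏' jk : ℕ × ℕ, b (jk.1, jk.2 + 1)) := by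
      rw [eq_div_iff hB1ne]; exact key2
    have hEw' : ellGamma w P Q
        = (∏' jk : ℕ × ℕ, a (jk.1, jk.2 + 1)) / (∏' jk : ℕ × ℕ, b jk) := by
      rw [eq_div_iff hNB]; exact key1
    rw [hEwQ', hEw', hTh, splitA, splitB]
    field_simp
  · -- degenerate case: some numerator factor vanishes, both sides are zero
    push_neg at hA
    obtain ⟨⟨j, k⟩, h0⟩ := hA
    have hLHS : ellGamma (w * Q) P Q = 0 := by
      rw [hEwQ]
      exact tprod_eq_zero_of (j, k) (by simp [h0])
    rw [hLHS]
    cases k with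
    | zero =>
      have hz : (∏' j' : ℕ, a (j', 0)) = 0 := tprod_eq_zero_of j h0
      rw [hTh, hz, mul_zero, zero_mul]
    | succ k' =>
      have hz : ellGamma w P Q = 0 := by
        rw [hEw]
        exact tprod_eq_zero_of (j, k') (by simp [h0])
      rw [hz, mul_zero]
/-- The elementary recurrence relations (3.12) for the lens-space elliptic gamma
function: `γ^{(r)}(qz,m+1) = θ(z p^m; p^r) γ^{(r)}(z,m)` and
`γ^{(r)}(pz,m−1) = θ(z q^{r−m}; q^r) γ^{(r)}(z,m)`. -/
theorem lensGamma_recurrences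
    (r : ℕ) (hr : 1 ≤ r) (p q : ℂ) (hp : p ≠ 0) (hq : q ≠ 0)
    (hp1 : ‖p‖ < 1) (hq1 : ‖q‖ < 1)
    (m : ℤ) (z : ℂ) (hz : z ≠ 0)
    (hreg : lensReg r z m p q)
    (hregq : lensReg r (q * z) (m + 1) p q)
    (hregp : lensReg r (p * z) (m - 1) p q) :
    lensGamma r (q * z) (m + 1) p q =
        theta0 (z * p ^ m) (p ^ r) * lensGamma r z m p q ∧
      lensGamma r (p * z) (m - 1) p q =
        theta0 (z * q ^ ((r : ℤ) - m)) (q ^ r) * lensGamma r z m p q := by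
  have hP0 : p ^ r ≠ 0 := pow_ne_zero _ hp
  have hQr0 : q ^ r ≠ 0 := pow_ne_zero _ hq
  have hPQ0 : p * q ≠ 0 := mul_ne_zero hp hq
  have hr0 : r ≠ 0 := by omega
  have habsP : ‖p ^ r‖ < 1 := by
    rw [norm_pow]; exact pow_lt_one₀ (norm_nonneg p) hp1 hr0
  have habsQ : ‖q ^ r‖ < 1 := by
    rw [norm_pow]; exact pow_lt_one₀ (norm_nonneg q) hq1 hr0
  have habsPQ : ‖p * q‖ < 1 := by
    rw [norm_mul]
    nlinarith [norm_nonneg p, norm_nonneg q]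
  constructor
  · have e1 : (q * z) * p ^ (m + 1) = (z * p ^ m) * (p * q) := by
      rw [zpow_add_one₀ hp]; ring
    have e2 : (q * z) * q ^ ((r : ℤ) - (m + 1)) = z * q ^ ((r : ℤ) - m) := by
      have h' : ((r : ℤ) - m) = ((r : ℤ) - (m + 1)) + 1 := by ring
      rw [h', zpow_add_one₀ hq]; ring
    have hw : z * p ^ m ≠ 0 := mul_ne_zero hz (zpow_ne_zero _ hp)
    have hshift := ellGamma_shift hP0 hPQ0 habsP habsPQ hw hreg.1 (e1 ▸ hregq.1)
    unfold lensGamma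
    rw [e1, e2, hshift]
    ring
  · have e3 : (p * z) * p ^ (m - 1) = z * p ^ m := by
      have h' : m = (m - 1) + 1 := by ring
      rw [h', zpow_add_one₀ hp]; ring_nf
    have e4 : (p * z) * q ^ ((r : ℤ) - (m - 1)) = (z * q ^ ((r : ℤ) - m)) * (p * q) := by
      have h' : ((r : ℤ) - (m - 1)) = ((r : ℤ) - m) + 1 := by ring
      rw [h', zpow_add_one₀ hq]; ring
    have hw : z * q ^ ((r : ℤ) - m) ≠ 0 := mul_ne_zero hz (zpow_ne_zero _ hq)
    have hshift := ellGamma_shift hQr0 hPQ0 habsQ habsPQ hw hreg.2 (e4 ▸ hregp.2)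
    unfold lensGamma
    rw [e3, e4, hshift]
    ring
end
end

section
/- Let r ≥ 1 be an integer, ε ∈ {0,1}, let p, q, t₁, …, t₆ be nonzero complex numbers with |p| < 1, |q| < 1, and let n₁, …, n₆ ∈ ℤ satisfy the balancing condition ∏_{a=1}^{6} t_a = pq and ∑_{a=1}^{6} n_a + 3ε = 0. Then for every m ∈ ℤ and every nonzero z ∈ ℂ not a pole of the factors involved, Δ_ε^{(r)}(z, m+r; t_a, n_a) = Δ_ε^{(r)}(z, m; t_a, n_a), i.e. the kernel of the rarefied elliptic beta integral is r-periodic in the discrete variable m. -/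
open Complex Finset

noncomputable section

/-- The kernel `Δ_ε^{(r)}(z,m;t_a,n_a)` of the rarefied elliptic beta integral. -/
def Δker (r : ℕ) (ε : ℤ) (p q σ τ : ℂ) (t : Fin 6 → ℂ) (n : Fin 6 → ℤ)
    (z : ℂ) (m : ℤ) : ℂ :=
  (∏ a, rarGamma r (t a * z) (n a + m + ε) p q σ τ *
      rarGamma r (t a * z⁻¹) (n a - m) p q σ τ) /
    (rarGamma r (z ^ 2) (2 * m + ε) p q σ τ *
      rarGamma r (z⁻¹ ^ 2) (-(2 * m + ε)) p q σ τ)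

/-- Regularity of the kernel `Δ_ε^{(r)}` at the point `(z,m)`: none of the rarefied
elliptic gamma factors involved sits at a pole and the denominator does not vanish. -/
def ΔReg (r : ℕ) (ε : ℤ) (p q σ τ : ℂ) (t : Fin 6 → ℂ) (n : Fin 6 → ℤ)
    (z : ℂ) (m : ℤ) : Prop :=
  (∀ a, lensReg r (t a * z) (n a + m + ε) p q ∧ lensReg r (t a * z⁻¹) (n a - m) p q) ∧
    lensReg r (z ^ 2) (2 * m + ε) p q ∧ lensReg r (z⁻¹ ^ 2) (-(2 * m + ε)) p q ∧
    rarGamma r (z ^ 2) (2 * m + ε) p q σ τ ≠ 0 ∧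
    rarGamma r (z⁻¹ ^ 2) (-(2 * m + ε)) p q σ τ ≠ 0

namespace RarAux

open Filter

lemma hasProd_of_zero {ι : Type*} {f : ι → ℂ} (i₀ : ι) (h : f i₀ = 0) : HasProd f 0 := by
  have hev : (fun s : Finset ι => ∏ i ∈ s, f i) =ᶠ[atTop] fun _ => (0 : ℂ) := by
    filter_upwards [eventually_ge_atTop ({i₀} : Finset ι)] with s hs
    exact Finset.prod_eq_zero (hs (Finset.mem_singleton_self i₀)) h
  exact Filter.Tendsto.congr' hev.symm tendsto_const_nhds

lemma tprod_of_zero {ι : Type*} {f : ι → ℂ} (i₀ : ι) (h : f i₀ = 0) : ∏' i, f i = 0 :=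
  (hasProd_of_zero i₀ h).tprod_eq

lemma summable_log_one_sub {ι : Type*} {u : ι → ℂ} (hu : Summable fun i => ‖u i‖) :
    Summable fun i => Complex.log (1 - u i) := by
  apply Summable.of_norm_bounded_eventually (g := fun i => 3/2 * ‖u i‖) (hu.mul_left _)
  have h0 : Tendsto u cofinite (nhds 0) := hu.of_norm.tendsto_cofinite_zero
  have hev : ∀ᶠ i in cofinite, ‖u i‖ ≤ 1/2 := by
    have := Metric.tendsto_nhds.mp h0 (1/2) (by norm_num)
    filter_upwards [this] with i hi
    simpa [dist_zero_right] using hi.le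
  filter_upwards [hev] with i hi
  have h := Complex.norm_log_one_add_half_le_self (z := -u i) (by simpa using hi)
  simpa [sub_eq_add_neg] using h

lemma hasProd_one_sub {ι : Type*} {u : ι → ℂ} (hu : Summable fun i => ‖u i‖)
    (h1 : ∀ i, 1 - u i ≠ 0) :
    HasProd (fun i => 1 - u i) (Complex.exp (∑' i, Complex.log (1 - u i))) := by
  have hs := summable_log_one_sub hu
  have h2 : (fun i => Complex.exp (Complex.log (1 - u i))) = fun i => 1 - u i :=
    funext fun i => Complex.exp_log (h1 i)
  have := hs.hasSum.cexp
  rwa [Function.comp_def, h2] at this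

lemma tprod_one_sub_eq_exp {ι : Type*} {u : ι → ℂ} (hu : Summable fun i => ‖u i‖)
    (h1 : ∀ i, 1 - u i ≠ 0) :
    ∏' i, (1 - u i) = Complex.exp (∑' i, Complex.log (1 - u i)) :=
  (hasProd_one_sub hu h1).tprod_eq

lemma hasProd_div {ι : Type*} {f g : ι → ℂ} {a b : ℂ} (hf : HasProd f a) (hg : HasProd g b)
    (hb : b ≠ 0) : HasProd (fun i => f i / g i) (a / b) := by
  have he : (fun s : Finset ι => ∏ i ∈ s, (f i / g i)) =
      fun s => (∏ i ∈ s, f i) / (∏ i ∈ s, g i) := by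
    funext s; exact Finset.prod_div_distrib _ _
  show Filter.Tendsto (fun s : Finset ι => ∏ i ∈ s, (f i / g i)) atTop (nhds (a / b))
  rw [he]
  exact Filter.Tendsto.div hf hg hb

lemma summable_norm_double {x P Q : ℂ} (hP : ‖P‖ < 1) (hQ : ‖Q‖ < 1) :
    Summable fun jk : ℕ × ℕ => ‖x * P ^ jk.1 * Q ^ jk.2‖ := by
  have h1 : Summable fun j : ℕ => ‖x‖ * ‖P‖ ^ j :=
    (summable_geometric_of_lt_one (norm_nonneg P) hP).mul_left _
  have h2 : Summable fun k : ℕ => ‖Q‖ ^ k := summable_geometric_of_lt_one (norm_nonneg Q) hQ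
  have h3 := h1.mul_of_nonneg h2 (fun j => by positivity) (fun k => by positivity)
  simpa [norm_mul, norm_pow, mul_assoc] using h3

lemma tsum_prod_split {F : ℕ × ℕ → ℂ} (hF : Summable F) :
    ∑' jk : ℕ × ℕ, F jk = (∑' k : ℕ, F (0, k)) + ∑' jk : ℕ × ℕ, F (jk.1 + 1, jk.2) := by
  have hslice : ∀ j : ℕ, Summable fun k => F (j, k) := fun j =>
    hF.comp_injective (i := fun k => ((j, k) : ℕ × ℕ)) (fun a b h => by simpa using h)
  have hfib : Summable fun j : ℕ => ∑' k, F (j, k) :=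
    ⟨_, hF.hasSum.prod_fiberwise fun j => (hslice j).hasSum⟩
  rw [Summable.tsum_prod' hF hslice, Summable.tsum_eq_zero_add hfib]
  congr 1
  have hF' : Summable fun jk : ℕ × ℕ => F (jk.1 + 1, jk.2) :=
    hF.comp_injective (i := fun jk : ℕ × ℕ => ((jk.1 + 1, jk.2) : ℕ × ℕ))
      (fun a b h => by
        simp only [Prod.mk.injEq] at h
        exact Prod.ext (by omega) h.2)
  rw [Summable.tsum_prod' hF' fun j => hslice (j + 1)]
def Ssum (x Q : ℂ) : ℂ := ∑' k : ℕ, Complex.log (1 - x * Q ^ k)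

def Lsum (x P Q : ℂ) : ℂ := ∑' jk : ℕ × ℕ, Complex.log (1 - x * P ^ jk.1 * Q ^ jk.2)

lemma summable_norm_single {x Q : ℂ} (hQ : ‖Q‖ < 1) : Summable fun k : ℕ => ‖x * Q ^ k‖ := by
  simpa [norm_mul, norm_pow] using
    (summable_geometric_of_lt_one (norm_nonneg Q) hQ).mul_left ‖x‖

lemma Ssum_split {x Q : ℂ} (hQ : ‖Q‖ < 1) :
    Ssum x Q = Complex.log (1 - x) + Ssum (x * Q) Q := by
  have hs : Summable fun k : ℕ => Complex.log (1 - x * Q ^ k) :=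
    summable_log_one_sub (summable_norm_single hQ)
  rw [Ssum, Summable.tsum_eq_zero_add hs]
  congr 1
  · norm_num
  · rw [Ssum]
    exact tsum_congr fun k => by
      rw [show 1 - x * Q ^ (k + 1) = 1 - x * Q * Q ^ k by ring]

lemma Lsum_split {x P Q : ℂ} (hP : ‖P‖ < 1) (hQ : ‖Q‖ < 1) :
    Lsum x P Q = Ssum x Q + Lsum (x * P) P Q := by
  have h := tsum_prod_split (F := fun jk : ℕ × ℕ => Complex.log (1 - x * P ^ jk.1 * Q ^ jk.2))
      (summable_log_one_sub (summable_norm_double hP hQ))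
  rw [Lsum, h]
  congr 1
  · exact tsum_congr fun k => by simp
  · exact tsum_congr fun jk => by
      show Complex.log (1 - x * P ^ (jk.1 + 1) * Q ^ jk.2) = _
      rw [show 1 - x * P ^ (jk.1 + 1) * Q ^ jk.2 = 1 - x * P * P ^ jk.1 * Q ^ jk.2 by ring]

lemma qPochInf_eq_exp {x Q : ℂ} (hQ : ‖Q‖ < 1) (h1 : ∀ k : ℕ, 1 - x * Q ^ k ≠ 0) :
    qPochInf x Q = Complex.exp (Ssum x Q) :=
  tprod_one_sub_eq_exp (summable_norm_single hQ) h1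

lemma qPochInf_eq_zero {x Q : ℂ} (k : ℕ) (h : 1 - x * Q ^ k = 0) : qPochInf x Q = 0 :=
  tprod_of_zero k h

lemma ellGamma_eq_zero {z P Q : ℂ} (j k : ℕ) (h : 1 - z⁻¹ * P ^ (j + 1) * Q ^ (k + 1) = 0) :
    ellGamma z P Q = 0 := by
  apply tprod_of_zero (⟨j, k⟩ : ℕ × ℕ)
  show (1 - z⁻¹ * P ^ (j + 1) * Q ^ (k + 1)) / (1 - z * P ^ j * Q ^ k) = 0
  rw [h, zero_div]

lemma ellGamma_eq_exp {z P Q : ℂ} (hP : ‖P‖ < 1) (hQ : ‖Q‖ < 1)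
    (hnum : ∀ j k : ℕ, 1 - z⁻¹ * P * Q * P ^ j * Q ^ k ≠ 0)
    (hden : ∀ j k : ℕ, 1 - z * P ^ j * Q ^ k ≠ 0) :
    ellGamma z P Q = Complex.exp (Lsum (z⁻¹ * P * Q) P Q - Lsum z P Q) := by
  unfold Lsum
  have hn : HasProd (fun jk : ℕ × ℕ => 1 - z⁻¹ * P * Q * P ^ jk.1 * Q ^ jk.2)
      (Complex.exp (∑' jk : ℕ × ℕ, Complex.log (1 - z⁻¹ * P * Q * P ^ jk.1 * Q ^ jk.2))) :=
    hasProd_one_sub (summable_norm_double hP hQ) fun jk => hnum jk.1 jk.2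
  have hd : HasProd (fun jk : ℕ × ℕ => 1 - z * P ^ jk.1 * Q ^ jk.2)
      (Complex.exp (∑' jk : ℕ × ℕ, Complex.log (1 - z * P ^ jk.1 * Q ^ jk.2))) :=
    hasProd_one_sub (summable_norm_double hP hQ) fun jk => hden jk.1 jk.2
  have h := (hasProd_div hn hd (Complex.exp_ne_zero _)).tprod_eq
  rw [ellGamma, ← Complex.exp_sub] at *
  rw [← h]
  exact tprod_congr fun jk => by
    rw [show 1 - z⁻¹ * P ^ (jk.1 + 1) * Q ^ (jk.2 + 1)
        = 1 - z⁻¹ * P * Q * P ^ jk.1 * Q ^ jk.2 by ring]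

lemma notPole_factor {w P Q : ℂ} (hP : P ≠ 0) (hQ : Q ≠ 0) (h : notPole w P Q) :
    ∀ j k : ℕ, 1 - w * P ^ j * Q ^ k ≠ 0 := by
  intro j k hc
  refine h j k ?_
  have hPj : (P : ℂ) ^ j ≠ 0 := pow_ne_zero _ hP
  have hQk : (Q : ℂ) ^ k ≠ 0 := pow_ne_zero _ hQ
  rw [zpow_neg, zpow_neg, zpow_natCast, zpow_natCast]
  field_simp
  linear_combination -hc

lemma ellGamma_shift {w P Q : ℂ} (hw : w ≠ 0) (hP0 : P ≠ 0) (hQ0 : Q ≠ 0)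
    (hP : ‖P‖ < 1) (hQ : ‖Q‖ < 1) (hnp : notPole w P Q) :
    ellGamma (P * w) P Q = theta0 w Q * ellGamma w P Q := by
  by_cases hdeg : ∃ j k : ℕ, w = P ^ j * Q ^ (k + 1)
  · obtain ⟨j, k, hjk⟩ := hdeg
    have hL : ellGamma (P * w) P Q = 0 := by
      apply ellGamma_eq_zero j k
      rw [hjk]
      have hx : P * (P ^ j * Q ^ (k + 1)) ≠ 0 :=
        mul_ne_zero hP0 (mul_ne_zero (pow_ne_zero _ hP0) (pow_ne_zero _ hQ0))
      field_simp
      ring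
    rw [hL]
    rcases j with _ | j'
    · have hw' : w = Q ^ (k + 1) := by simpa using hjk
      have hq : qPochInf (Q * w⁻¹) Q = 0 := by
        apply qPochInf_eq_zero k
        rw [hw']
        have h0 : Q ^ (k + 1) ≠ 0 := pow_ne_zero _ hQ0
        field_simp
        ring
      rw [theta0, hq, mul_zero, zero_mul]
    · have hG : ellGamma w P Q = 0 := by
        apply ellGamma_eq_zero j' k
        rw [hjk]
        have h0 : P ^ (j' + 1) * Q ^ (k + 1) ≠ 0 :=
          mul_ne_zero (pow_ne_zero _ hP0) (pow_ne_zero _ hQ0)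
        field_simp
        norm_num
      rw [hG, mul_zero]
  · push_neg at hdeg
    have hden := notPole_factor hP0 hQ0 hnp
    have hnum : ∀ j k : ℕ, 1 - w⁻¹ * Q * P ^ j * Q ^ k ≠ 0 := by
      intro j k hc
      apply hdeg j k
      have h1 : w⁻¹ * (P ^ j * Q ^ (k + 1)) = 1 := by linear_combination -hc
      field_simp at h1
      linear_combination -h1
    have harg1 : (P * w)⁻¹ * P * Q = w⁻¹ * Q := by
      field_simp
    have e1 : ellGamma (P * w) P Q
        = Complex.exp (Lsum (w⁻¹ * Q) P Q - Lsum (P * w) P Q) := by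
      have h := ellGamma_eq_exp (z := P * w) hP hQ
        (fun j k => by rw [harg1]; exact hnum j k)
        (fun j k hc => hden (j + 1) k (by linear_combination hc))
      rwa [harg1] at h
    have e2 : ellGamma w P Q = Complex.exp (Lsum (w⁻¹ * P * Q) P Q - Lsum w P Q) := by
      refine ellGamma_eq_exp hP hQ (fun j k hc => hdeg (j + 1) k ?_) hden
      have h1 : w⁻¹ * (P ^ (j + 1) * Q ^ (k + 1)) = 1 := by linear_combination -hc
      field_simp at h1
      linear_combination -h1
    have e3 : qPochInf w Q = Complex.exp (Ssum w Q) :=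
      qPochInf_eq_exp hQ (fun k => by
        have h := hden 0 k
        intro hc; apply h; linear_combination hc)
    have e4 : qPochInf (Q * w⁻¹) Q = Complex.exp (Ssum (Q * w⁻¹) Q) := by
      refine qPochInf_eq_exp hQ (fun k hc => hdeg 0 k ?_)
      have h1 : w⁻¹ * (P ^ 0 * Q ^ (k + 1)) = 1 := by
        rw [pow_zero, one_mul]
        linear_combination -hc
      field_simp at h1
      linear_combination -h1
    rw [e1, theta0, e3, e4, e2, ← Complex.exp_add, ← Complex.exp_add]
    congr 1
    rw [Lsum_split (x := w⁻¹ * Q) hP hQ, Lsum_split (x := w) hP hQ]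
    rw [show w⁻¹ * Q * P = w⁻¹ * P * Q by ring, show P * w = w * P by ring,
      show Q * w⁻¹ = w⁻¹ * Q by ring]
    ring

lemma theta0_step {x s : ℂ} (hx : x ≠ 0) (hs0 : s ≠ 0) (hs1 : ‖s‖ < 1) :
    theta0 (s * x) s = -x⁻¹ * theta0 x s := by
  by_cases hdeg : ∃ n : ℤ, x = s ^ n
  · obtain ⟨n, rfl⟩ := hdeg
    have hz : ∀ m : ℤ, theta0 (s ^ m) s = 0 := by
      intro m
      rcases le_or_gt m 0 with hm | hm
      · have h0 : qPochInf (s ^ m) s = 0 := by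
          apply qPochInf_eq_zero (-m).toNat
          have h1 : ((-m).toNat : ℤ) = -m := Int.toNat_of_nonneg (by omega)
          rw [← zpow_natCast s (-m).toNat, h1, ← zpow_add₀ hs0]
          simp
        rw [theta0, h0, zero_mul]
      · have h0 : qPochInf (s * (s ^ m)⁻¹) s = 0 := by
          apply qPochInf_eq_zero (m - 1).toNat
          have h1 : ((m - 1).toNat : ℤ) = m - 1 := Int.toNat_of_nonneg (by omega)
          rw [← zpow_natCast s (m - 1).toNat, h1, ← zpow_neg]
          have hh : s * (s ^ m)⁻¹ * s ^ (m - 1) = s ^ ((1 : ℤ) + -m + (m - 1)) := by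
            rw [zpow_add₀ hs0, zpow_add₀ hs0, zpow_one, zpow_neg]
          rw [← zpow_neg] at hh
          rw [hh, show (1 : ℤ) + -m + (m - 1) = 0 by ring, zpow_zero, sub_self]
        rw [theta0, h0, mul_zero]
    rw [show s * s ^ n = s ^ (n + 1) by rw [zpow_add₀ hs0, zpow_one]; ring]
    rw [hz (n + 1), hz n, mul_zero]
  · push_neg at hdeg
    have hf1 : ∀ k : ℕ, 1 - x * s ^ k ≠ 0 := by
      intro k hc
      apply hdeg (-(k : ℤ))
      have h1 : x * s ^ k = 1 := by linear_combination -hc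
      rw [zpow_neg, zpow_natCast]
      exact eq_inv_of_mul_eq_one_left (by linear_combination h1)
    have hf2 : ∀ k : ℕ, 1 - x⁻¹ * s ^ k ≠ 0 := by
      intro k hc
      apply hdeg (k : ℤ)
      have h1 : x⁻¹ * s ^ k = 1 := by linear_combination -hc
      rw [zpow_natCast]
      field_simp at h1
      linear_combination -h1
    have q1 : qPochInf (s * x) s = Complex.exp (Ssum (s * x) s) :=
      qPochInf_eq_exp hs1 (fun k => by
        have h := hf1 (k + 1)
        intro hc; apply h; linear_combination hc)
    have harg : s * (s * x)⁻¹ = x⁻¹ := by field_simp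
    have q2 : qPochInf (s * (s * x)⁻¹) s = Complex.exp (Ssum x⁻¹ s) := by
      rw [harg]; exact qPochInf_eq_exp hs1 hf2
    have q3 : qPochInf x s = Complex.exp (Ssum x s) := qPochInf_eq_exp hs1 hf1
    have q4 : qPochInf (s * x⁻¹) s = Complex.exp (Ssum (s * x⁻¹) s) :=
      qPochInf_eq_exp hs1 (fun k => by
        have h := hf2 (k + 1)
        intro hc; apply h; linear_combination hc)
    rw [theta0, theta0, q1, q2, q3, q4]
    rw [Ssum_split (x := x⁻¹) hs1, Ssum_split (x := x) hs1]
    rw [Complex.exp_add, Complex.exp_add]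
    rw [Complex.exp_log (by have h := hf2 0; simpa using h),
      Complex.exp_log (by have h := hf1 0; simpa using h)]
    rw [show x⁻¹ * s = s * x⁻¹ by ring, show x * s = s * x by ring]
    have hkey : (1 : ℂ) - x⁻¹ = -x⁻¹ * (1 - x) := by
      field_simp
      ring
    rw [hkey]
    ring

lemma even_mul_pred (M : ℤ) : ∃ a : ℤ, M * (M - 1) = 2 * a := by
  obtain ⟨a, ha⟩ := Int.even_mul_succ_self (M - 1)
  exact ⟨a, by linear_combination ha⟩

lemma theta0_zpow {s : ℂ} (hs0 : s ≠ 0) (hs1 : ‖s‖ < 1) :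
    ∀ (M : ℤ) {x : ℂ}, x ≠ 0 →
      theta0 (s ^ M * x) s = (-x) ^ (-M) * s ^ (-(M * (M - 1) / 2)) * theta0 x s := by
  intro M
  induction M using Int.induction_on with
  | zero => intro x hx; simp
  | succ M ih =>
      intro x hx
      have hx' : s ^ (M : ℤ) * x ≠ 0 := mul_ne_zero (zpow_ne_zero _ hs0) hx
      have hxne : (-x) ≠ 0 := neg_ne_zero.mpr hx
      have h1 : s ^ ((M : ℤ) + 1) * x = s * (s ^ (M : ℤ) * x) := by
        rw [zpow_add₀ hs0, zpow_one]; ring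
      rw [h1, theta0_step hx' hs0 hs1, ih hx]
      have hT : ((M : ℤ) + 1) * ((M : ℤ) + 1 - 1) / 2 = (M : ℤ) * ((M : ℤ) - 1) / 2 + M := by
        obtain ⟨a, ha⟩ := even_mul_pred (M : ℤ)
        have hb : ((M : ℤ) + 1) * ((M : ℤ) + 1 - 1) = 2 * a + 2 * M := by linear_combination ha
        omega
      rw [hT]
      rw [show -((M : ℤ) + 1) = -(M : ℤ) + (-1) by ring, zpow_add₀ hxne,
        show -((M : ℤ) * ((M : ℤ) - 1) / 2 + (M : ℤ))
          = -((M : ℤ) * ((M : ℤ) - 1) / 2) + (-(M : ℤ)) by ring, zpow_add₀ hs0]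
      rw [mul_inv, ← zpow_neg, zpow_neg_one, inv_neg]
      ring
  | pred M ih =>
      intro x hx
      have hy : s ^ (-(M : ℤ) - 1) * x ≠ 0 := mul_ne_zero (zpow_ne_zero _ hs0) hx
      have hxne : (-x) ≠ 0 := neg_ne_zero.mpr hx
      have key := theta0_step (x := s ^ (-(M : ℤ) - 1) * x) hy hs0 hs1
      have h1 : s * (s ^ (-(M : ℤ) - 1) * x) = s ^ (-(M : ℤ)) * x := by
        rw [show -(M : ℤ) = 1 + (-(M : ℤ) - 1) by ring, zpow_add₀ hs0, zpow_one]; ring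
      rw [h1] at key
      have key2 : theta0 (s ^ (-(M : ℤ) - 1) * x) s
          = -(s ^ (-(M : ℤ) - 1) * x) * theta0 (s ^ (-(M : ℤ)) * x) s := by
        rw [key]
        field_simp
      rw [key2, ih hx]
      have hT : (-(M : ℤ) - 1) * (-(M : ℤ) - 1 - 1) / 2
          = -(M : ℤ) * (-(M : ℤ) - 1) / 2 + ((M : ℤ) + 1) := by
        obtain ⟨a, ha⟩ := even_mul_pred (-(M : ℤ))
        have hb : (-(M : ℤ) - 1) * (-(M : ℤ) - 1 - 1) = 2 * a + 2 * ((M : ℤ) + 1) := by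
          linear_combination ha
        omega
      rw [hT]
      rw [show -(-(M : ℤ) - 1) = -(-(M : ℤ)) + 1 by ring, zpow_add₀ hxne,
        show -(-(M : ℤ) * (-(M : ℤ) - 1) / 2 + ((M : ℤ) + 1))
          = -(-(M : ℤ) * (-(M : ℤ) - 1) / 2) + (-(M : ℤ) - 1) by ring, zpow_add₀ hs0]
      rw [zpow_one]
      ring

lemma exists6 (M : ℤ) : ∃ c : ℤ, M * (M - 1) * (2 * M - 1) = 6 * c := by
  obtain ⟨a, ha⟩ := even_mul_pred M
  have h2 : (2 : ℤ) ∣ M * (M - 1) * (2 * M - 1) :=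
    ⟨a * (2 * M - 1), by linear_combination (2 * M - 1) * ha⟩
  have h3 : (3 : ℤ) ∣ M * (M - 1) * (2 * M - 1) := by
    have hm : M % 3 = 0 ∨ M % 3 = 1 ∨ M % 3 = 2 := by omega
    obtain ⟨k, hk⟩ : ∃ k, M = 3 * k + M % 3 := ⟨M / 3, by omega⟩
    rcases hm with h | h | h <;> rw [h] at hk <;> subst hk
    · exact ⟨k * (3 * k + 0 - 1) * (2 * (3 * k + 0) - 1), by ring⟩
    · exact ⟨(3 * k + 1) * k * (2 * (3 * k + 1) - 1), by ring⟩
    · exact ⟨(3 * k + 2) * (3 * k + 1) * (2 * k + 1), by ring⟩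
  obtain ⟨u, hu⟩ := h2
  obtain ⟨v, hv⟩ := h3
  have h6 : (6 : ℤ) ∣ M * (M - 1) * (2 * M - 1) := by omega
  exact h6

def phiE (r : ℕ) (M : ℤ) : ℤ := ((r : ℤ) - 1) * M + (r : ℤ) * ((r : ℤ) - 1) / 2

def psiE (r : ℕ) (M : ℤ) : ℤ :=
  ((r : ℤ) - 1) * M ^ 2 + (r : ℤ) * ((r : ℤ) - 1) * M
    + (r : ℤ) * ((r : ℤ) - 1) * (2 * (r : ℤ) - 1) / 6

lemma rarGamma_shift (r : ℕ) (hr : 1 ≤ r) {p q σ τ : ℂ} (hp : p ≠ 0) (hq : q ≠ 0)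
    (hp1 : ‖p‖ < 1) (hq1 : ‖q‖ < 1) (hσ : σ ^ 2 = p * q) (hστ : σ * τ = p)
    {w : ℂ} (hw : w ≠ 0) (M : ℤ)
    (h1 : lensReg r w M p q) (h2 : lensReg r w (M + (r : ℤ)) p q) :
    rarGamma r w (M + (r : ℤ)) p q σ τ
      = (-w) ^ phiE r M * σ ^ (-phiE r M) * τ ^ psiE r M * rarGamma r w M p q σ τ := by
  have hσ0 : σ ≠ 0 := fun h => hp (by rw [← hστ, h, zero_mul])
  have hτ0 : τ ≠ 0 := fun h => hp (by rw [← hστ, h, mul_zero])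
  have hs0 : p * q ≠ 0 := mul_ne_zero hp hq
  have hs1 : ‖p * q‖ < 1 := by
    rw [norm_mul]
    have h := mul_lt_mul'' hp1 hq1 (norm_nonneg p) (norm_nonneg q)
    simpa using h
  have hr0 : r ≠ 0 := by omega
  have hP0 : (p : ℂ) ^ r ≠ 0 := pow_ne_zero _ hp
  have hQ0 : (q : ℂ) ^ r ≠ 0 := pow_ne_zero _ hq
  have hP1 : ‖(p : ℂ) ^ r‖ < 1 := by
    rw [norm_pow]; exact pow_lt_one₀ (norm_nonneg _) hp1 hr0
  have hQ1 : ‖(q : ℂ) ^ r‖ < 1 := by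
    rw [norm_pow]; exact pow_lt_one₀ (norm_nonneg _) hq1 hr0
  have h22 : notPole (w * q ^ (-M)) (q ^ r) (p * q) := by
    have h := h2.2
    rwa [show (r : ℤ) - (M + (r : ℤ)) = -M by ring] at h
  have hwp : w * p ^ M ≠ 0 := mul_ne_zero hw (zpow_ne_zero _ hp)
  have hwq : w * q ^ (-M) ≠ 0 := mul_ne_zero hw (zpow_ne_zero _ hq)
  have hA : ellGamma (w * p ^ (M + (r : ℤ))) (p ^ r) (p * q)
      = theta0 (w * p ^ M) (p * q) * ellGamma (w * p ^ M) (p ^ r) (p * q) := by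
    have h := ellGamma_shift hwp hP0 hs0 hP1 hs1 h1.1
    rwa [show (p : ℂ) ^ r * (w * p ^ M) = w * p ^ (M + (r : ℤ)) by
      rw [zpow_add₀ hp, zpow_natCast]; ring] at h
  have hB : ellGamma (w * q ^ ((r : ℤ) - M)) (q ^ r) (p * q)
      = theta0 (w * q ^ (-M)) (p * q) * ellGamma (w * q ^ (-M)) (q ^ r) (p * q) := by
    have h := ellGamma_shift hwq hQ0 hs0 hQ1 hs1 h22
    rwa [show (q : ℂ) ^ r * (w * q ^ (-M)) = w * q ^ ((r : ℤ) - M) by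
      rw [show (r : ℤ) - M = -M + (r : ℤ) by ring, zpow_add₀ hq, zpow_natCast]; ring] at h
  have hC : theta0 (w * p ^ M) (p * q)
      = (-(w * q ^ (-M))) ^ (-M) * (p * q) ^ (-(M * (M - 1) / 2))
        * theta0 (w * q ^ (-M)) (p * q) := by
    have h := theta0_zpow hs0 hs1 M hwq
    rwa [show (p * q) ^ M * (w * q ^ (-M)) = w * p ^ M by
      rw [mul_zpow, zpow_neg]
      field_simp [zpow_ne_zero]] at h
  have hlens : lensGamma r w (M + (r : ℤ)) p q
      = (-(w * q ^ (-M))) ^ (-M) * (p * q) ^ (-(M * (M - 1) / 2)) * lensGamma r w M p q := by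
    unfold lensGamma
    rw [show (r : ℤ) - (M + (r : ℤ)) = -M by ring, hA, hB, hC]
    ring
  -- arithmetic of the integer exponents
  obtain ⟨a, ha⟩ := even_mul_pred M
  obtain ⟨b, hb⟩ := even_mul_pred (r : ℤ)
  obtain ⟨c, hc⟩ := exists6 M
  obtain ⟨d, hd⟩ := exists6 (r : ℤ)
  have hT0 : M * (M - 1) / 2 = a := by
    rw [ha]; exact Int.mul_ediv_cancel_left _ two_ne_zero
  have hTr : (r : ℤ) * ((r : ℤ) - 1) / 2 = b := by
    rw [hb]; exact Int.mul_ediv_cancel_left _ two_ne_zero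
  have hT1 : (M + (r : ℤ)) * (M + (r : ℤ) - 1) / 2 = a + b + (r : ℤ) * M := by
    rw [show (M + (r : ℤ)) * (M + (r : ℤ) - 1) = 2 * (a + b + (r : ℤ) * M) by
      linear_combination ha + hb]
    exact Int.mul_ediv_cancel_left _ two_ne_zero
  have hU0 : M * (M - 1) * (2 * M - 1) / 6 = c := by
    rw [hc]; exact Int.mul_ediv_cancel_left _ (by norm_num)
  have hUr : (r : ℤ) * ((r : ℤ) - 1) * (2 * (r : ℤ) - 1) / 6 = d := by
    rw [hd]; exact Int.mul_ediv_cancel_left _ (by norm_num)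
  have hU1 : (M + (r : ℤ)) * (M + (r : ℤ) - 1) * (2 * (M + (r : ℤ)) - 1) / 6
      = c + (r : ℤ) * M ^ 2 + 2 * b * M + d := by
    rw [show (M + (r : ℤ)) * (M + (r : ℤ) - 1) * (2 * (M + (r : ℤ)) - 1)
        = 6 * (c + (r : ℤ) * M ^ 2 + 2 * b * M + d) by
      linear_combination hc + hd + 6 * M * hb]
    exact Int.mul_ediv_cancel_left _ (by norm_num)
  have hτq : τ * q = σ := by
    have h3 : σ * (τ * q) = σ * σ := by linear_combination q * hστ - hσ
    exact mul_left_cancel₀ hσ0 h3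
  have hq' : q = σ * τ⁻¹ := by
    rw [← hτq]; rw [mul_comm τ q, mul_assoc, mul_inv_cancel₀ hτ0, mul_one]
  have hmw : (-w) ≠ 0 := neg_ne_zero.mpr hw
  have hD0 : (-w / σ) ≠ 0 := div_ne_zero hmw hσ0
  -- middle-part collapse
  have hmid : (-(w * q ^ (-M))) ^ (-M) * (p * q) ^ (-(M * (M - 1) / 2))
      = (-w / σ) ^ (-M) * τ ^ (-(M * M)) := by
    rw [hT0]
    rw [show -(w * q ^ (-M)) = (-w / σ) * σ * q ^ (-M) by
      rw [div_mul_cancel₀ _ hσ0]; ring]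
    rw [← hσ, show σ ^ 2 = σ * σ by ring]
    rw [mul_zpow, mul_zpow, mul_zpow, ← zpow_mul]
    rw [hq', mul_zpow, inv_zpow']
    rw [show (-M) * (-M) = M * M by ring]
    have hσ1 : σ ^ (-M) * σ ^ (M * M) * σ ^ (-a) * σ ^ (-a) = 1 := by
      rw [← zpow_add₀ hσ0, ← zpow_add₀ hσ0, ← zpow_add₀ hσ0,
        show -M + M * M + -a + -a = 0 by linear_combination ha]
      exact zpow_zero σ
    linear_combination ((-w / σ) ^ (-M) * τ ^ (-(M * M))) * hσ1
  have hDφ : ∀ e : ℤ, (-w) ^ e * σ ^ (-e) = (-w / σ) ^ e := by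
    intro e
    rw [div_eq_mul_inv, mul_zpow, inv_zpow']
  have SC : (-w / σ) ^ ((M + (r : ℤ)) * (M + (r : ℤ) - 1) / 2)
      * τ ^ ((M + (r : ℤ)) * (M + (r : ℤ) - 1) * (2 * (M + (r : ℤ)) - 1) / 6)
      * ((-(w * q ^ (-M))) ^ (-M) * (p * q) ^ (-(M * (M - 1) / 2)))
      = (-w) ^ phiE r M * σ ^ (-phiE r M) * τ ^ psiE r M
        * ((-w / σ) ^ (M * (M - 1) / 2) * τ ^ (M * (M - 1) * (2 * M - 1) / 6)) := by
    have hphi : phiE r M = (r : ℤ) * M - M + b := by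
      simp only [phiE]; rw [hTr]; ring
    have hpsi : psiE r M = (r : ℤ) * M ^ 2 - M ^ 2 + 2 * b * M + d := by
      simp only [psiE]; rw [hUr]; linear_combination M * hb
    rw [hmid, hDφ (phiE r M), hT1, hU1, hT0, hU0, hphi, hpsi]
    calc (-w / σ) ^ (a + b + (r : ℤ) * M) * τ ^ (c + (r : ℤ) * M ^ 2 + 2 * b * M + d)
          * ((-w / σ) ^ (-M) * τ ^ (-(M * M)))
        = (-w / σ) ^ (a + b + (r : ℤ) * M + -M)
          * τ ^ (c + (r : ℤ) * M ^ 2 + 2 * b * M + d + -(M * M)) := by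
          rw [zpow_add₀ hD0 (a + b + (r : ℤ) * M) (-M),
            zpow_add₀ hτ0 (c + (r : ℤ) * M ^ 2 + 2 * b * M + d) (-(M * M))]
          ring
      _ = (-w / σ) ^ ((r : ℤ) * M - M + b + a)
          * τ ^ ((r : ℤ) * M ^ 2 - M ^ 2 + 2 * b * M + d + c) := by
          rw [show a + b + (r : ℤ) * M + -M = (r : ℤ) * M - M + b + a by ring,
            show c + (r : ℤ) * M ^ 2 + 2 * b * M + d + -(M * M)
              = (r : ℤ) * M ^ 2 - M ^ 2 + 2 * b * M + d + c by ring]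
      _ = (-w / σ) ^ ((r : ℤ) * M - M + b) * τ ^ ((r : ℤ) * M ^ 2 - M ^ 2 + 2 * b * M + d)
          * ((-w / σ) ^ a * τ ^ c) := by
          rw [zpow_add₀ hD0 ((r : ℤ) * M - M + b) a,
            zpow_add₀ hτ0 ((r : ℤ) * M ^ 2 - M ^ 2 + 2 * b * M + d) c]
          ring
  unfold rarGamma
  rw [hlens]
  linear_combination (lensGamma r w M p q) * SC

def Kc (r : ℕ) (σ τ w : ℂ) (M : ℤ) : ℂ :=
  (-w) ^ phiE r M * σ ^ (-phiE r M) * τ ^ psiE r M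

def quadPow (z σ τ : ℂ) (i j k l : ℤ) : ℂ := (-1) ^ i * z ^ j * σ ^ k * τ ^ l

lemma Kc_ne_zero (r : ℕ) {σ τ w : ℂ} (hσ0 : σ ≠ 0) (hτ0 : τ ≠ 0) (hw : w ≠ 0) (M : ℤ) :
    Kc r σ τ w M ≠ 0 :=
  mul_ne_zero (mul_ne_zero (zpow_ne_zero _ (neg_ne_zero.mpr hw)) (zpow_ne_zero _ hσ0))
    (zpow_ne_zero _ hτ0)

lemma quadPow_mul {z σ τ : ℂ} (hz : z ≠ 0) (hσ0 : σ ≠ 0) (hτ0 : τ ≠ 0)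
    (i j k l i' j' k' l' : ℤ) :
    quadPow z σ τ i j k l * quadPow z σ τ i' j' k' l'
      = quadPow z σ τ (i + i') (j + j') (k + k') (l + l') := by
  simp only [quadPow, zpow_add₀ (show (-1 : ℂ) ≠ 0 by norm_num), zpow_add₀ hz,
    zpow_add₀ hσ0, zpow_add₀ hτ0]
  ring

lemma prod_quadPow {ι : Type*} (s : Finset ι) {z σ τ : ℂ} (hz : z ≠ 0) (hσ0 : σ ≠ 0)
    (hτ0 : τ ≠ 0) (F G H K : ι → ℤ) :
    ∏ a ∈ s, quadPow z σ τ (F a) (G a) (H a) (K a)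
      = quadPow z σ τ (∑ a ∈ s, F a) (∑ a ∈ s, G a) (∑ a ∈ s, H a) (∑ a ∈ s, K a) := by
  induction s using Finset.cons_induction with
  | empty => simp [quadPow]
  | cons i s his ih =>
      rw [Finset.prod_cons, Finset.sum_cons, Finset.sum_cons, Finset.sum_cons,
        Finset.sum_cons, ih, quadPow_mul hz hσ0 hτ0]

lemma quadPow_parity {z σ τ : ℂ} (i i' j k l : ℤ) (u : ℤ) (h : i = i' + 2 * u) :
    quadPow z σ τ i j k l = quadPow z σ τ i' j k l := by
  subst h
  simp only [quadPow]
  rw [zpow_add₀ (show (-1 : ℂ) ≠ 0 by norm_num), zpow_mul]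
  norm_num

lemma Kc_mulz (r : ℕ) {σ τ z : ℂ} (w : ℂ) (M : ℤ) :
    Kc r σ τ (w * z) M
      = w ^ phiE r M * quadPow z σ τ (phiE r M) (phiE r M) (-phiE r M) (psiE r M) := by
  simp only [Kc, quadPow]
  rw [show -(w * z) = (-1) * w * z by ring, mul_zpow, mul_zpow]
  ring

lemma Kc_mulzinv (r : ℕ) {σ τ z : ℂ} (w : ℂ) (M : ℤ) :
    Kc r σ τ (w * z⁻¹) M
      = w ^ phiE r M * quadPow z σ τ (phiE r M) (-phiE r M) (-phiE r M) (psiE r M) := by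
  simp only [Kc, quadPow]
  rw [show -(w * z⁻¹) = (-1) * w * z⁻¹ by ring, mul_zpow, mul_zpow, inv_zpow']
  ring

lemma Kc_zsq (r : ℕ) {σ τ z : ℂ} (hz : z ≠ 0) (M : ℤ) :
    Kc r σ τ (z ^ 2) M
      = quadPow z σ τ (phiE r M) (phiE r M + phiE r M) (-phiE r M) (psiE r M) := by
  simp only [Kc, quadPow]
  rw [show -(z ^ 2) = (-1) * z * z by ring, mul_zpow, mul_zpow, zpow_add₀ hz]
  ring

lemma Kc_zinvsq (r : ℕ) {σ τ z : ℂ} (hz : z ≠ 0) (M : ℤ) :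
    Kc r σ τ (z⁻¹ ^ 2) M
      = quadPow z σ τ (phiE r M) (-phiE r M + -phiE r M) (-phiE r M) (psiE r M) := by
  simp only [Kc, quadPow]
  rw [show -(z⁻¹ ^ 2) = (-1) * z⁻¹ * z⁻¹ by ring, mul_zpow, mul_zpow, inv_zpow',
    zpow_add₀ hz]
  ring

lemma K_identity (r : ℕ) {p q σ τ z : ℂ} (t : Fin 6 → ℂ) (n : Fin 6 → ℤ) (m ε : ℤ)
    (hz : z ≠ 0) (hσ0 : σ ≠ 0) (hτ0 : τ ≠ 0) (ht : ∀ a, t a ≠ 0)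
    (hσ : σ ^ 2 = p * q) (hbal1 : ∏ a, t a = p * q) (hbal2 : (∑ a, n a) + 3 * ε = 0) :
    (∏ a, Kc r σ τ (t a * z) (n a + m + ε))
        * (Kc r σ τ (z⁻¹ ^ 2) (-(2 * m + ε) - ↑r) * Kc r σ τ (z⁻¹ ^ 2) (-(2 * m + ε) - 2 * ↑r))
      = (∏ a, Kc r σ τ (t a * z⁻¹) (n a - m - ↑r))
        * (Kc r σ τ (z ^ 2) (2 * m + ε + ↑r) * Kc r σ τ (z ^ 2) (2 * m + ε)) := by
  have hn6 : (∑ a, n a) = -3 * ε := by linarith [hbal2]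
  obtain ⟨b, hb⟩ := even_mul_pred (r : ℤ)
  have hC : (r : ℤ) * ((r : ℤ) - 1) / 2 = b := by
    rw [hb]; exact Int.mul_ediv_cancel_left _ two_ne_zero
  have hL1 : (∏ a, Kc r σ τ (t a * z) (n a + m + ε))
      = (∏ a, (t a) ^ phiE r (n a + m + ε))
        * quadPow z σ τ (∑ a, phiE r (n a + m + ε)) (∑ a, phiE r (n a + m + ε))
            (∑ a, -phiE r (n a + m + ε)) (∑ a, psiE r (n a + m + ε)) := by
    rw [Finset.prod_congr rfl fun a _ => Kc_mulz r (t a) (n a + m + ε),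
      Finset.prod_mul_distrib, prod_quadPow _ hz hσ0 hτ0]
  have hR1 : (∏ a, Kc r σ τ (t a * z⁻¹) (n a - m - ↑r))
      = (∏ a, (t a) ^ phiE r (n a - m - ↑r))
        * quadPow z σ τ (∑ a, phiE r (n a - m - ↑r)) (∑ a, -phiE r (n a - m - ↑r))
            (∑ a, -phiE r (n a - m - ↑r)) (∑ a, psiE r (n a - m - ↑r)) := by
    rw [Finset.prod_congr rfl fun a _ => Kc_mulzinv r (t a) (n a - m - ↑r),
      Finset.prod_mul_distrib, prod_quadPow _ hz hσ0 hτ0]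
  have hT : (∏ a, (t a) ^ phiE r (n a + m + ε))
      = (∏ a, (t a) ^ phiE r (n a - m - ↑r))
        * quadPow z σ τ 0 0
            (((r : ℤ) - 1) * (2 * m + ε + ↑r) + ((r : ℤ) - 1) * (2 * m + ε + ↑r)) 0 := by
    have h1 : ∀ a : Fin 6, (t a) ^ phiE r (n a + m + ε)
        = (t a) ^ phiE r (n a - m - ↑r) * (t a) ^ (((r : ℤ) - 1) * (2 * m + ε + ↑r)) := by
      intro a
      rw [← zpow_add₀ (ht a)]
      congr 1
      simp only [phiE]; ring
    rw [Finset.prod_congr rfl fun a _ => h1 a, Finset.prod_mul_distrib, Finset.prod_zpow,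
      hbal1, ← hσ]
    congr 1
    simp only [quadPow]
    rw [show (σ : ℂ) ^ 2 = σ * σ by ring, mul_zpow,
      zpow_add₀ hσ0 (((r : ℤ) - 1) * (2 * m + ε + ↑r)) (((r : ℤ) - 1) * (2 * m + ε + ↑r))]
    simp only [zpow_zero]
    ring
  have hSeSf : (∑ a, phiE r (n a + m + ε))
      = (∑ a, phiE r (n a - m - ↑r)) + 6 * (((r : ℤ) - 1) * (2 * m + ε + ↑r)) := by
    have h1 : ∀ a : Fin 6, phiE r (n a + m + ε)
        = phiE r (n a - m - ↑r) + ((r : ℤ) - 1) * (2 * m + ε + ↑r) := fun a => by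
      simp only [phiE]; ring
    rw [Finset.sum_congr rfl fun a _ => h1 a, Finset.sum_add_distrib, Finset.sum_const,
      Finset.card_univ, Fintype.card_fin, nsmul_eq_mul]
    push_cast
    ring
  have hNSe : (∑ a, -phiE r (n a + m + ε)) = -(∑ a, phiE r (n a + m + ε)) :=
    Finset.sum_neg_distrib _
  have hNSf : (∑ a, -phiE r (n a - m - ↑r)) = -(∑ a, phiE r (n a - m - ↑r)) :=
    Finset.sum_neg_distrib _
  have hSf : (∑ a, phiE r (n a - m - ↑r))
      = ((r : ℤ) - 1) * (-3 * ε - 6 * m - 6 * ↑r) + 6 * b := by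
    simp only [phiE]
    rw [Finset.sum_add_distrib, Finset.sum_const, Finset.card_univ, Fintype.card_fin,
      ← Finset.mul_sum, Finset.sum_sub_distrib, Finset.sum_sub_distrib, Finset.sum_const,
      Finset.sum_const, Finset.card_univ, Fintype.card_fin, hn6, hC, nsmul_eq_mul,
      nsmul_eq_mul, nsmul_eq_mul]
    push_cast
    ring
  have hsum1 : (∑ a : Fin 6, (2 * n a + ε - (r : ℤ))) = -6 * (r : ℤ) := by
    rw [Finset.sum_sub_distrib, Finset.sum_add_distrib, Finset.sum_const, Finset.sum_const,
      Finset.card_univ, Fintype.card_fin, ← Finset.mul_sum, hn6, nsmul_eq_mul, nsmul_eq_mul]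
    push_cast
    ring
  have hPePf : (∑ a, psiE r (n a + m + ε)) = (∑ a, psiE r (n a - m - ↑r)) := by
    have h1 : ∀ a : Fin 6, psiE r (n a + m + ε)
        = psiE r (n a - m - ↑r)
          + ((((r : ℤ) - 1) * (2 * m + ε + ↑r)) * (2 * n a + ε - ↑r)
            + (r : ℤ) * ((r : ℤ) - 1) * (2 * m + ε + ↑r)) := fun a => by
      simp only [psiE]; ring
    rw [Finset.sum_congr rfl fun a _ => h1 a, Finset.sum_add_distrib, Finset.sum_add_distrib,
      ← Finset.mul_sum, hsum1, Finset.sum_const, Finset.card_univ, Fintype.card_fin,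
      nsmul_eq_mul]
    push_cast
    ring
  have hassocL : ∀ (x a c d e : ℂ), ((x * a) * c) * (d * e) = x * (a * (c * (d * e))) := by
    intros; ring
  have hassocR : ∀ (x a c d : ℂ), (x * a) * (c * d) = x * (a * (c * d)) := by
    intros; ring
  have hLfin : (∏ a, Kc r σ τ (t a * z) (n a + m + ε))
      * (Kc r σ τ (z⁻¹ ^ 2) (-(2 * m + ε) - ↑r) * Kc r σ τ (z⁻¹ ^ 2) (-(2 * m + ε) - 2 * ↑r))
      = (∏ a, (t a) ^ phiE r (n a - m - ↑r)) * quadPow z σ τ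
          (0 + ((∑ a, phiE r (n a + m + ε))
            + (phiE r (-(2 * m + ε) - ↑r) + phiE r (-(2 * m + ε) - 2 * ↑r))))
          (0 + ((∑ a, phiE r (n a + m + ε))
            + ((-phiE r (-(2 * m + ε) - ↑r) + -phiE r (-(2 * m + ε) - ↑r))
              + (-phiE r (-(2 * m + ε) - 2 * ↑r) + -phiE r (-(2 * m + ε) - 2 * ↑r)))))
          ((((r : ℤ) - 1) * (2 * m + ε + ↑r) + ((r : ℤ) - 1) * (2 * m + ε + ↑r))
            + ((∑ a, -phiE r (n a + m + ε))
              + (-phiE r (-(2 * m + ε) - ↑r) + -phiE r (-(2 * m + ε) - 2 * ↑r))))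
          (0 + ((∑ a, psiE r (n a + m + ε))
            + (psiE r (-(2 * m + ε) - ↑r) + psiE r (-(2 * m + ε) - 2 * ↑r)))) := by
    rw [hL1, hT, Kc_zinvsq r hz (-(2 * m + ε) - ↑r), Kc_zinvsq r hz (-(2 * m + ε) - 2 * ↑r)]
    rw [hassocL]
    rw [quadPow_mul hz hσ0 hτ0, quadPow_mul hz hσ0 hτ0, quadPow_mul hz hσ0 hτ0]
  have hRfin : (∏ a, Kc r σ τ (t a * z⁻¹) (n a - m - ↑r))
      * (Kc r σ τ (z ^ 2) (2 * m + ε + ↑r) * Kc r σ τ (z ^ 2) (2 * m + ε))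
      = (∏ a, (t a) ^ phiE r (n a - m - ↑r)) * quadPow z σ τ
          ((∑ a, phiE r (n a - m - ↑r)) + (phiE r (2 * m + ε + ↑r) + phiE r (2 * m + ε)))
          ((∑ a, -phiE r (n a - m - ↑r))
            + ((phiE r (2 * m + ε + ↑r) + phiE r (2 * m + ε + ↑r))
              + (phiE r (2 * m + ε) + phiE r (2 * m + ε))))
          ((∑ a, -phiE r (n a - m - ↑r))
            + (-phiE r (2 * m + ε + ↑r) + -phiE r (2 * m + ε)))
          ((∑ a, psiE r (n a - m - ↑r)) + (psiE r (2 * m + ε + ↑r) + psiE r (2 * m + ε))) := by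
    rw [hR1, Kc_zsq r hz (2 * m + ε + ↑r), Kc_zsq r hz (2 * m + ε)]
    rw [hassocR]
    rw [quadPow_mul hz hσ0 hτ0, quadPow_mul hz hσ0 hτ0]
  rw [hLfin, hRfin]
  congr 1
  rw [show (0 + ((∑ a, phiE r (n a + m + ε))
        + ((-phiE r (-(2 * m + ε) - ↑r) + -phiE r (-(2 * m + ε) - ↑r))
          + (-phiE r (-(2 * m + ε) - 2 * ↑r) + -phiE r (-(2 * m + ε) - 2 * ↑r)))))
      = ((∑ a, -phiE r (n a - m - ↑r))
        + ((phiE r (2 * m + ε + ↑r) + phiE r (2 * m + ε + ↑r))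
          + (phiE r (2 * m + ε) + phiE r (2 * m + ε)))) by
    rw [hNSf, hSeSf, hSf]
    simp only [phiE]
    rw [hC]
    linear_combination (-2 : ℤ) * hb]
  rw [show ((((r : ℤ) - 1) * (2 * m + ε + ↑r) + ((r : ℤ) - 1) * (2 * m + ε + ↑r))
        + ((∑ a, -phiE r (n a + m + ε))
          + (-phiE r (-(2 * m + ε) - ↑r) + -phiE r (-(2 * m + ε) - 2 * ↑r))))
      = ((∑ a, -phiE r (n a - m - ↑r))
        + (-phiE r (2 * m + ε + ↑r) + -phiE r (2 * m + ε))) by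
    rw [hNSe, hNSf, hSeSf]
    simp only [phiE]
    ring]
  rw [show (0 + ((∑ a, psiE r (n a + m + ε))
        + (psiE r (-(2 * m + ε) - ↑r) + psiE r (-(2 * m + ε) - 2 * ↑r))))
      = ((∑ a, psiE r (n a - m - ↑r)) + (psiE r (2 * m + ε + ↑r) + psiE r (2 * m + ε))) by
    rw [hPePf]
    simp only [psiE]
    ring]
  exact quadPow_parity _ _ _ _ _ (((r : ℤ) - 1) * (2 * m + ε + ↑r)) (by
    rw [hSeSf]
    simp only [phiE]
    ring)

lemma notPole_mul {u P Q : ℂ} (hP : P ≠ 0) (h : notPole u P Q) : notPole (u * P) P Q := by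
  intro j k hc
  apply h (j + 1) k
  have h2 : u = P ^ (-(j : ℤ)) * Q ^ (-(k : ℤ)) / P := by
    rw [← hc]; field_simp
  rw [h2, show (-((j : ℕ) + 1 : ℕ) : ℤ) = -(j : ℤ) + (-1) by push_cast; ring,
    zpow_add₀ hP, zpow_neg_one]
  ring

lemma lensReg_mid (r : ℕ) {w p q : ℂ} (hp : p ≠ 0) (hq : q ≠ 0) (M : ℤ)
    (h1 : lensReg r w M p q) (h2 : lensReg r w (M + 2 * (r : ℤ)) p q) :
    lensReg r w (M + (r : ℤ)) p q := by
  constructor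
  · have h := notPole_mul (pow_ne_zero r hp) h1.1
    rwa [show w * p ^ M * p ^ r = w * p ^ (M + (r : ℤ)) by
      rw [zpow_add₀ hp, zpow_natCast]; ring] at h
  · have h := notPole_mul (pow_ne_zero r hq) h2.2
    rwa [show w * q ^ ((r : ℤ) - (M + 2 * (r : ℤ))) * q ^ r = w * q ^ ((r : ℤ) - (M + (r : ℤ))) by
      rw [show (r : ℤ) - (M + (r : ℤ)) = ((r : ℤ) - (M + 2 * (r : ℤ))) + (r : ℤ) by ring,
        zpow_add₀ hq, zpow_natCast]
      ring] at h

end RarAux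

open RarAux in
/-- Under the balancing condition the kernel of the rarefied elliptic beta integral is
`r`-periodic in the discrete variable `m` (formula (4.6) of the paper). -/
theorem Delta_kernel_r_periodic
    (r : ℕ) (hr : 1 ≤ r) (ε : ℤ) (hε : ε = 0 ∨ ε = 1)
    (p q σ τ : ℂ) (hp : p ≠ 0) (hq : q ≠ 0)
    (hp1 : ‖p‖ < 1) (hq1 : ‖q‖ < 1)
    (hσ : σ ^ 2 = p * q) (hτ : τ ^ 2 = p / q) (hστ : σ * τ = p)
    (t : Fin 6 → ℂ) (n : Fin 6 → ℤ) (ht : ∀ a, t a ≠ 0)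
    (hbal1 : ∏ a, t a = p * q) (hbal2 : (∑ a, n a) + 3 * ε = 0)
    (m : ℤ) (z : ℂ) (hz : z ≠ 0)
    (hreg1 : ΔReg r ε p q σ τ t n z m)
    (hreg2 : ΔReg r ε p q σ τ t n z (m + (r : ℤ))) :
    Δker r ε p q σ τ t n z (m + (r : ℤ)) = Δker r ε p q σ τ t n z m := by
  have hp1' : ‖p‖ < 1 := hp1
  have hq1' : ‖q‖ < 1 := hq1
  have hσ0 : σ ≠ 0 := fun h => hp (by rw [← hστ, h, zero_mul])
  have hτ0 : τ ≠ 0 := fun h => hp (by rw [← hστ, h, mul_zero])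
  obtain ⟨hf1, hd11, hd12, hn11, hn12⟩ := hreg1
  obtain ⟨hf2, hd21, hd22, hn21, hn22⟩ := hreg2
  have KEY : ∀ (w : ℂ), w ≠ 0 → ∀ M : ℤ, lensReg r w M p q → lensReg r w (M + (r : ℤ)) p q →
      rarGamma r w (M + (r : ℤ)) p q σ τ = Kc r σ τ w M * rarGamma r w M p q σ τ :=
    fun w hw M hM1 hM2 => rarGamma_shift r hr hp hq hp1' hq1' hσ hστ hw M hM1 hM2
  -- numerator at m + r
  have hNumL : (∏ a, rarGamma r (t a * z) (n a + (m + (r : ℤ)) + ε) p q σ τ *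
        rarGamma r (t a * z⁻¹) (n a - (m + (r : ℤ))) p q σ τ)
      = (∏ a, Kc r σ τ (t a * z) (n a + m + ε)) *
        (∏ a, rarGamma r (t a * z) (n a + m + ε) p q σ τ *
          rarGamma r (t a * z⁻¹) (n a - m - (r : ℤ)) p q σ τ) := by
    rw [← Finset.prod_mul_distrib]
    refine Finset.prod_congr rfl fun a _ => ?_
    have hA2 : lensReg r (t a * z) (n a + m + ε + (r : ℤ)) p q := by
      have h := (hf2 a).1
      rwa [show n a + (m + (r : ℤ)) + ε = n a + m + ε + (r : ℤ) by ring] at h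
    rw [show n a + (m + (r : ℤ)) + ε = n a + m + ε + (r : ℤ) by ring,
      show n a - (m + (r : ℤ)) = n a - m - (r : ℤ) by ring,
      KEY (t a * z) (mul_ne_zero (ht a) hz) (n a + m + ε) (hf1 a).1 hA2]
    ring
  -- numerator at m
  have hNumM : (∏ a, rarGamma r (t a * z) (n a + m + ε) p q σ τ *
        rarGamma r (t a * z⁻¹) (n a - m) p q σ τ)
      = (∏ a, Kc r σ τ (t a * z⁻¹) (n a - m - (r : ℤ))) *
        (∏ a, rarGamma r (t a * z) (n a + m + ε) p q σ τ *
          rarGamma r (t a * z⁻¹) (n a - m - (r : ℤ)) p q σ τ) := by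
    rw [← Finset.prod_mul_distrib]
    refine Finset.prod_congr rfl fun a _ => ?_
    have hB1 : lensReg r (t a * z⁻¹) (n a - m - (r : ℤ)) p q := by
      have h := (hf2 a).2
      rwa [show n a - (m + (r : ℤ)) = n a - m - (r : ℤ) by ring] at h
    have hB2 : lensReg r (t a * z⁻¹) (n a - m - (r : ℤ) + (r : ℤ)) p q := by
      have h := (hf1 a).2
      rwa [show n a - m = n a - m - (r : ℤ) + (r : ℤ) by ring] at h
    rw [show n a - m = n a - m - (r : ℤ) + (r : ℤ) by ring,
      KEY (t a * z⁻¹) (mul_ne_zero (ht a) (inv_ne_zero hz)) (n a - m - (r : ℤ)) hB1 hB2]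
    ring
  -- denominator pieces
  have hd21' : lensReg r (z ^ 2) (2 * m + ε + 2 * (r : ℤ)) p q := by
    have h := hd21
    rwa [show 2 * (m + (r : ℤ)) + ε = 2 * m + ε + 2 * (r : ℤ) by ring] at h
  have hdmid1 : lensReg r (z ^ 2) (2 * m + ε + (r : ℤ)) p q :=
    lensReg_mid r hp hq (2 * m + ε) hd11 hd21'
  have s1 : rarGamma r (z ^ 2) (2 * m + ε + (r : ℤ)) p q σ τ
      = Kc r σ τ (z ^ 2) (2 * m + ε) * rarGamma r (z ^ 2) (2 * m + ε) p q σ τ :=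
    KEY (z ^ 2) (pow_ne_zero 2 hz) (2 * m + ε) hd11 hdmid1
  have s2 : rarGamma r (z ^ 2) (2 * m + ε + (r : ℤ) + (r : ℤ)) p q σ τ
      = Kc r σ τ (z ^ 2) (2 * m + ε + (r : ℤ))
        * rarGamma r (z ^ 2) (2 * m + ε + (r : ℤ)) p q σ τ :=
    KEY (z ^ 2) (pow_ne_zero 2 hz) (2 * m + ε + (r : ℤ)) hdmid1
      (by rwa [show 2 * m + ε + (r : ℤ) + (r : ℤ) = 2 * m + ε + 2 * (r : ℤ) by ring])
  have eqD1 : rarGamma r (z ^ 2) (2 * (m + (r : ℤ)) + ε) p q σ τ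
      = Kc r σ τ (z ^ 2) (2 * m + ε + (r : ℤ)) *
        (Kc r σ τ (z ^ 2) (2 * m + ε) * rarGamma r (z ^ 2) (2 * m + ε) p q σ τ) := by
    rw [show 2 * (m + (r : ℤ)) + ε = 2 * m + ε + (r : ℤ) + (r : ℤ) by ring, s2, s1]
  have hd22' : lensReg r (z⁻¹ ^ 2) (-(2 * m + ε) - 2 * (r : ℤ)) p q := by
    have h := hd22
    rwa [show -(2 * (m + (r : ℤ)) + ε) = -(2 * m + ε) - 2 * (r : ℤ) by ring] at h
  have hd12' : lensReg r (z⁻¹ ^ 2) (-(2 * m + ε) - 2 * (r : ℤ) + 2 * (r : ℤ)) p q := by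
    have h := hd12
    rwa [show -(2 * m + ε) = -(2 * m + ε) - 2 * (r : ℤ) + 2 * (r : ℤ) by ring] at h
  have hdmid2 : lensReg r (z⁻¹ ^ 2) (-(2 * m + ε) - 2 * (r : ℤ) + (r : ℤ)) p q :=
    lensReg_mid r hp hq (-(2 * m + ε) - 2 * (r : ℤ)) hd22' hd12'
  have hdmid2' : lensReg r (z⁻¹ ^ 2) (-(2 * m + ε) - (r : ℤ)) p q := by
    have h := hdmid2
    rwa [show -(2 * m + ε) - 2 * (r : ℤ) + (r : ℤ) = -(2 * m + ε) - (r : ℤ) by ring] at h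
  have t1 : rarGamma r (z⁻¹ ^ 2) (-(2 * m + ε) - 2 * (r : ℤ) + (r : ℤ)) p q σ τ
      = Kc r σ τ (z⁻¹ ^ 2) (-(2 * m + ε) - 2 * (r : ℤ))
        * rarGamma r (z⁻¹ ^ 2) (-(2 * m + ε) - 2 * (r : ℤ)) p q σ τ :=
    KEY (z⁻¹ ^ 2) (pow_ne_zero 2 (inv_ne_zero hz)) (-(2 * m + ε) - 2 * (r : ℤ)) hd22' hdmid2
  have t2 : rarGamma r (z⁻¹ ^ 2) (-(2 * m + ε) - (r : ℤ) + (r : ℤ)) p q σ τ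
      = Kc r σ τ (z⁻¹ ^ 2) (-(2 * m + ε) - (r : ℤ))
        * rarGamma r (z⁻¹ ^ 2) (-(2 * m + ε) - (r : ℤ)) p q σ τ :=
    KEY (z⁻¹ ^ 2) (pow_ne_zero 2 (inv_ne_zero hz)) (-(2 * m + ε) - (r : ℤ)) hdmid2'
      (by rwa [show -(2 * m + ε) - (r : ℤ) + (r : ℤ) = -(2 * m + ε) by ring])
  have eqD2 : rarGamma r (z⁻¹ ^ 2) (-(2 * m + ε)) p q σ τ
      = Kc r σ τ (z⁻¹ ^ 2) (-(2 * m + ε) - (r : ℤ)) *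
        (Kc r σ τ (z⁻¹ ^ 2) (-(2 * m + ε) - 2 * (r : ℤ))
          * rarGamma r (z⁻¹ ^ 2) (-(2 * m + ε) - 2 * (r : ℤ)) p q σ τ) := by
    have e1 := t2
    rw [show -(2 * m + ε) - (r : ℤ) + (r : ℤ) = -(2 * m + ε) by ring] at e1
    have e2 := t1
    rw [show -(2 * m + ε) - 2 * (r : ℤ) + (r : ℤ) = -(2 * m + ε) - (r : ℤ) by ring] at e2
    rw [e1, e2]
  have hD2' : rarGamma r (z⁻¹ ^ 2) (-(2 * m + ε) - 2 * (r : ℤ)) p q σ τ ≠ 0 := by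
    have h := hn22
    rwa [show -(2 * (m + (r : ℤ)) + ε) = -(2 * m + ε) - 2 * (r : ℤ) by ring] at h
  -- nonvanishing of the K constants
  have hK1 := Kc_ne_zero r hσ0 hτ0 (pow_ne_zero 2 hz) (2 * m + ε + (r : ℤ))
  have hK2 := Kc_ne_zero r hσ0 hτ0 (pow_ne_zero 2 hz) (2 * m + ε)
  have hK3 := Kc_ne_zero r hσ0 hτ0 (pow_ne_zero 2 (inv_ne_zero hz)) (-(2 * m + ε) - (r : ℤ))
  have hK4 := Kc_ne_zero r hσ0 hτ0 (pow_ne_zero 2 (inv_ne_zero hz)) (-(2 * m + ε) - 2 * (r : ℤ))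
  have KID := K_identity r t n m ε hz hσ0 hτ0 ht hσ hbal1 hbal2
  -- assemble
  rw [Δker, Δker, hNumL, hNumM, eqD1, eqD2,
    show -(2 * (m + (r : ℤ)) + ε) = -(2 * m + ε) - 2 * (r : ℤ) by ring]
  rw [div_eq_div_iff
    (mul_ne_zero (mul_ne_zero hK1 (mul_ne_zero hK2 hn11)) hD2')
    (mul_ne_zero hn11 (mul_ne_zero hK3 (mul_ne_zero hK4 hD2')))]
  linear_combination ((∏ a, rarGamma r (t a * z) (n a + m + ε) p q σ τ *
      rarGamma r (t a * z⁻¹) (n a - m - (r : ℤ)) p q σ τ) *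
    rarGamma r (z ^ 2) (2 * m + ε) p q σ τ *
    rarGamma r (z⁻¹ ^ 2) (-(2 * m + ε) - 2 * (r : ℤ)) p q σ τ) * KID
end
end
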